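/- Let r be a positive integer and let 0 < λ < 1. Then the function g(z) = (1 + (λ/(2r))·z²)^r · exp(−z²/2) is strictly decreasing on [0, ∞) and strictly increasing on (−∞, 0]; in particular g(z) < g(0) for every z ≠ 0, so the short-tailed symmetric density is unimodal with unique mode at z = 0. -/

import Mathlib

open Set

lemma sts_aux (r : ℕ) (hr : 0 < r) (lam : ℝ) (hlam0 : 0 < lam) (hlam1 : lam < 1) :
    StrictAntiOn (fun t : ℝ => (1 + lam / (2 * r) * t) ^ r * Real.exp (-t / 2)) (Ici 0) := by
  set c : ℝ := lam / (2 * r) with hc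
  have hrpos : (0 : ℝ) < r := by exact_mod_cast hr
  have hcpos : 0 < c := by positivity
  have hderiv : ∀ t : ℝ, HasDerivAt (fun t : ℝ => (1 + c * t) ^ r * Real.exp (-t / 2))
      ((r : ℝ) * (1 + c * t) ^ (r - 1) * c * Real.exp (-t / 2)
        + (1 + c * t) ^ r * (Real.exp (-t / 2) * (-1 / 2))) t := by
    intro t
    have h1 : HasDerivAt (fun t : ℝ => 1 + c * t) c t := by
      simpa using ((hasDerivAt_id t).const_mul c).const_add 1
    have h2 : HasDerivAt (fun t : ℝ => Real.exp (-t / 2)) (Real.exp (-t / 2) * (-1 / 2)) t := by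
      have : HasDerivAt (fun t : ℝ => -t / 2) (-1 / 2) t := by
        simpa using ((hasDerivAt_id t).neg.div_const 2)
      exact this.exp
    exact ((h1.pow r).mul h2).congr_deriv (by simp only [Pi.pow_apply])
  apply strictAntiOn_of_deriv_neg (convex_Ici 0)
  · exact (Continuous.mul (by continuity) (by continuity)).continuousOn
  · intro t ht
    rw [interior_Ici] at ht
    have ht0 : (0 : ℝ) < t := ht
    rw [(hderiv t).deriv]
    have hbase : (0 : ℝ) < 1 + c * t := by positivity
    have hrc : (r : ℝ) * c = lam / 2 := by
      field_simp [hc]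
      rw [hc]; field_simp
    have hexp : (0 : ℝ) < Real.exp (-t / 2) := Real.exp_pos _
    have hpow1 : (0 : ℝ) < (1 + c * t) ^ (r - 1) := pow_pos hbase _
    have hpowsucc : (1 + c * t) ^ r = (1 + c * t) ^ (r - 1) * (1 + c * t) := by
      rw [← pow_succ]
      congr 1
      omega
    rw [hpowsucc]
    have key : (r : ℝ) * c < (1 + c * t) / 2 := by
      rw [hrc]
      nlinarith
    nlinarith [mul_pos hpow1 hexp]

theorem sts_unimodal
    (r : ℕ) (hr : 0 < r) (lam : ℝ) (hlam0 : 0 < lam) (hlam1 : lam < 1) :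
    StrictAntiOn (fun z : ℝ => (1 + lam / (2 * r) * z ^ 2) ^ r * Real.exp (-z ^ 2 / 2))
        (Ici 0) ∧
    StrictMonoOn (fun z : ℝ => (1 + lam / (2 * r) * z ^ 2) ^ r * Real.exp (-z ^ 2 / 2))
        (Iic 0) ∧
    ∀ z : ℝ, z ≠ 0 →
      (1 + lam / (2 * r) * z ^ 2) ^ r * Real.exp (-z ^ 2 / 2)
        < (1 + lam / (2 * r) * (0 : ℝ) ^ 2) ^ r * Real.exp (-(0 : ℝ) ^ 2 / 2) := by
  have h := sts_aux r hr lam hlam0 hlam1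
  have hanti : StrictAntiOn (fun z : ℝ => (1 + lam / (2 * r) * z ^ 2) ^ r * Real.exp (-z ^ 2 / 2))
      (Ici 0) := by
    intro a ha b hb hab
    exact h (sq_nonneg a) (sq_nonneg b) (by nlinarith [ha.out])
  have hmono : StrictMonoOn (fun z : ℝ => (1 + lam / (2 * r) * z ^ 2) ^ r * Real.exp (-z ^ 2 / 2))
      (Iic 0) := by
    intro a ha b hb hab
    exact h (sq_nonneg b) (sq_nonneg a) (by nlinarith [mul_pos (show (0:ℝ) < b - a from by linarith) (show (0:ℝ) < -(a + b) from by have := hb.out; linarith)])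
  refine ⟨hanti, hmono, fun z hz => ?_⟩
  rcases hz.lt_or_gt with hneg | hpos
  · exact hmono (le_of_lt hneg) (le_refl (0:ℝ)) hneg
  · exact hanti (le_refl (0:ℝ) : (0:ℝ) ∈ Ici 0) (le_of_lt hpos) hpos
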